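/- arXiv:1711.02880 — 4 statements merged into one kernel-verified Lean document; each statement's English description precedes it below -/
import Mathlib

section
/- Let x ∈ ℕ^I and n = ∑_{i∈I} x_i. Then Φ(x) = ∑_c ∏_{p=1}^{n} 1 / M(⋃_{q=1}^{p} 𝒦_{c_q}), where the sum ranges over all sequences c = (c_1, …, c_n) ∈ I^n in which each class i ∈ I occurs exactly x_i times. (Consequently, the aggregate stationary measure of the FCFS order-independent queue model coincides with the stationary measure π(x) = π(0) Φ(x) λ^x of balanced fairness.) -/
open scoped BigOperators

/-- The balance function of balanced fairness: `Φ(0) = 1` and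
`Φ(x) = (∑_{i : x_i > 0} Φ(x - e_i)) / M(⋃_{i : x_i > 0} 𝒦_i)`. -/
noncomputable def Phi {I K : Type} [Fintype I] [DecidableEq I] [DecidableEq K]
    (μ : K → ℝ) (Ka : I → Finset K) (x : I → ℕ) : ℝ :=
  if x = fun _ => 0 then 1
  else (∑ i ∈ (Finset.univ.filter (fun i => 0 < x i)).attach,
      Phi μ Ka (Function.update x i.1 (x i.1 - 1))) /
    (∑ k ∈ (Finset.univ.filter (fun i => 0 < x i)).biUnion Ka, μ k)
termination_by ∑ i, x i
decreasing_by
  have hi := i.2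
  simp only [Finset.mem_filter] at hi
  apply Finset.sum_lt_sum
  · intro j _
    rcases eq_or_ne j i.1 with rfl | h
    · simp [Function.update_self]
    · rw [Function.update_of_ne h]
  · exact ⟨i.1, Finset.mem_univ i.1, by simp [Function.update_self]; omega⟩

/-- For `x ∈ ℕ^I` and `n = ∑_i x_i`,
`Φ(x) = ∑_c ∏_{p=1}^n 1 / M(⋃_{q=1}^p 𝒦_{c_q})`, the sum ranging over all sequences
`c = (c_1, …, c_n) ∈ I^n` in which each class `i` occurs exactly `x_i` times. -/
theorem balance_function_eq_sum_over_sequences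
    {I K : Type} [Fintype I] [DecidableEq I] [Nonempty I]
    [Fintype K] [DecidableEq K] [Nonempty K]
    (μ : K → ℝ) (hμ : ∀ k, 0 < μ k)
    (Ka : I → Finset K) (hKa : ∀ i, (Ka i).Nonempty) (hcov : ∀ k, ∃ i, k ∈ Ka i)
    (x : I → ℕ) (n : ℕ) (hn : n = ∑ i, x i) :
    Phi μ Ka x =
      ∑ c ∈ Finset.univ.filter
          (fun c : Fin n → I =>
            ∀ i, (Finset.univ.filter (fun p => c p = i)).card = x i),
        ∏ p : Fin n,
          1 / ∑ k ∈ (Finset.univ.filter (fun q : Fin n => q ≤ p)).biUnion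
              (fun q => Ka (c q)), μ k := by
  classical
  induction n generalizing x with
  | zero =>
    have hx : x = fun _ => 0 := by
      funext i
      exact Finset.sum_eq_zero_iff.mp hn.symm i (Finset.mem_univ i)
    rw [Phi, if_pos hx]
    have hfilt : (Finset.univ.filter
        (fun c : Fin 0 → I =>
          ∀ i, (Finset.univ.filter (fun p => c p = i)).card = x i)) = Finset.univ := by
      apply Finset.filter_true_of_mem
      intro c _ i
      simp [hx]
    rw [hfilt]
    simp [Finset.card_univ]
  | succ m IH =>
    have hx0 : x ≠ fun _ => 0 := by
      intro h; rw [h] at hn; simp at hn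
    -- counts of snoc
    have hsnoc_count : ∀ (c' : Fin m → I) (i j : I),
        (Finset.univ.filter (fun p : Fin (m+1) => Fin.snoc (α := fun _ => I) c' i p = j)).card
          = (Finset.univ.filter (fun p : Fin m => c' p = j)).card
            + (if i = j then 1 else 0) := by
      intro c' i j
      rw [Finset.card_filter, Finset.card_filter, Fin.sum_univ_castSucc]
      simp [Fin.snoc_castSucc, Fin.snoc_last]
    rw [Phi, if_neg hx0]
    rw [← Finset.sum_fiberwise_of_maps_to
      (g := fun c : Fin (m+1) → I => c (Fin.last m))
      (t := Finset.univ.filter (fun i => 0 < x i))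
      (fun c hc => by
        simp only [Finset.mem_filter, Finset.mem_univ, true_and] at hc ⊢
        rw [← hc (c (Fin.last m))]
        exact Finset.card_pos.mpr ⟨Fin.last m, by simp⟩)]
    rw [Finset.sum_div, ← Finset.sum_attach
      (Finset.univ.filter (fun i => 0 < x i))
      (fun i => (∑ c ∈ (Finset.univ.filter
          (fun c : Fin (m+1) → I =>
            ∀ j, (Finset.univ.filter (fun p => c p = j)).card = x j)).filter
          (fun c => c (Fin.last m) = i),
        ∏ p : Fin (m+1),
          1 / ∑ k ∈ (Finset.univ.filter (fun q : Fin (m+1) => q ≤ p)).biUnion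
              (fun q => Ka (c q)), μ k))]
    apply Finset.sum_congr rfl
    rintro ⟨i, hi⟩ -
    simp only [Finset.mem_filter, Finset.mem_univ, true_and] at hi
    -- hi : 0 < x i
    have hn' : m = ∑ j, Function.update x i (x i - 1) j := by
      rw [Finset.sum_update_of_mem (Finset.mem_univ i)]
      have h2 : x i + ∑ j ∈ Finset.univ.erase i, x j = ∑ j, x j :=
        Finset.add_sum_erase _ _ (Finset.mem_univ i)
      rw [Finset.erase_eq] at h2
      omega
    rw [IH _ hn', Finset.sum_div]
    refine (Finset.sum_nbij' (fun c : Fin (m+1) → I => Fin.init c)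
      (fun c' : Fin m → I => Fin.snoc c' i) ?_ ?_ ?_ ?_ ?_).symm
    · -- fiber → counts update
      intro c hc
      simp only [Finset.mem_filter, Finset.mem_univ, true_and] at hc ⊢
      obtain ⟨hcnt, hlast⟩ := hc
      intro j
      have h := hsnoc_count (Fin.init c) i j
      have hs : Fin.snoc (Fin.init c) i = c := by
        rw [← hlast]; exact Fin.snoc_init_self c
      rw [hs, hcnt j] at h
      rcases eq_or_ne j i with rfl | hji
      · rw [Function.update_self]; simp at h; omega
      · rw [Function.update_of_ne hji]; simp [Ne.symm hji] at h; omega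
    · -- counts update → fiber
      intro c' hc'
      simp only [Finset.mem_filter, Finset.mem_univ, true_and] at hc' ⊢
      refine ⟨fun j => ?_, Fin.snoc_last _ _⟩
      rw [hsnoc_count c' i j, hc' j]
      rcases eq_or_ne j i with rfl | hji
      · rw [Function.update_self]; simp; omega
      · rw [Function.update_of_ne hji]; simp [Ne.symm hji]
    · intro c hc
      simp only [Finset.mem_filter, Finset.mem_univ, true_and] at hc
      rw [← hc.2]
      exact Fin.snoc_init_self c
    · intro c' _
      exact Fin.init_snoc (α := fun _ => I) i c'
    · -- main computation: the product over Fin (m+1) splits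
      intro c hc
      simp only [Finset.mem_filter, Finset.mem_univ, true_and] at hc
      obtain ⟨hcnt, hlast⟩ := hc
      rw [Fin.prod_univ_castSucc]
      -- last factor
      have hlastset : (Finset.univ.filter
            (fun q : Fin (m+1) => q ≤ Fin.last m)).biUnion (fun q => Ka (c q))
          = (Finset.univ.filter (fun i => 0 < x i)).biUnion Ka := by
        ext k
        simp only [Finset.mem_biUnion, Finset.mem_filter, Finset.mem_univ, true_and]
        constructor
        · rintro ⟨q, -, hk⟩
          refine ⟨c q, ?_, hk⟩
          rw [← hcnt (c q)]
          exact Finset.card_pos.mpr ⟨q, by simp⟩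
        · rintro ⟨j, hj, hk⟩
          rw [← hcnt j] at hj
          obtain ⟨q, hq⟩ := Finset.card_pos.mp hj
          simp only [Finset.mem_filter, Finset.mem_univ, true_and] at hq
          exact ⟨q, Fin.le_last q, hq ▸ hk⟩
      -- prefix factors
      have hpref : ∀ p' : Fin m,
          (Finset.univ.filter
            (fun q : Fin (m+1) => q ≤ p'.castSucc)).biUnion (fun q => Ka (c q))
          = (Finset.univ.filter (fun q : Fin m => q ≤ p')).biUnion
              (fun q => Ka (Fin.init c q)) := by
        intro p'
        ext k
        simp only [Finset.mem_biUnion, Finset.mem_filter, Finset.mem_univ, true_and]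
        constructor
        · rintro ⟨q, hq, hk⟩
          have hq' : q.val < m := lt_of_le_of_lt (by exact_mod_cast hq) p'.isLt
          refine ⟨⟨q.val, hq'⟩, by exact_mod_cast hq, ?_⟩
          have : Fin.castSucc (⟨q.val, hq'⟩ : Fin m) = q := by
            ext; simp
          rw [Fin.init, this]; exact hk
        · rintro ⟨q, hq, hk⟩
          refine ⟨q.castSucc, by exact_mod_cast hq, ?_⟩
          rw [Fin.init] at hk; exact hk
      rw [hlastset, mul_one_div]
      congr 1
      apply Finset.prod_congr rfl
      intro p' _
      rw [hpref p']
end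

section
/- Let x ∈ ℕ^I with n = ∑_{j∈I} x_j ≥ 1, and let i ∈ I with x_i > 0. Then Φ(x − e_i) = ∑_c ( ∏_{p=1}^{n} 1 / M(⋃_{q=1}^{p} 𝒦_{c_q}) ) · ∑_{p : c_p = i} ( M(⋃_{q=1}^{p} 𝒦_{c_q}) − M(⋃_{q=1}^{p−1} 𝒦_{c_q}) ), where the outer sum ranges over all sequences c = (c_1, …, c_n) ∈ I^n in which each class j ∈ I occurs exactly x_j times, and with the convention M(∅) = 0. (This states that the balanced-fairness service rate φ_i(x) = Φ(x−e_i)/Φ(x) is the mean service rate of class i under sequential FCFS scheduling, conditioned on the per-class job counts.) -/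
open scoped BigOperators

namespace BFaux
open Finset

variable {I K : Type} [Fintype I] [DecidableEq I] [Fintype K] [DecidableEq K]
variable (μ : K → ℝ) (Ka : I → Finset K)
set_option linter.unusedSectionVars false

noncomputable def mass (s : Finset K) : ℝ := ∑ k ∈ s, μ k

def Act (x : I → ℕ) : Finset I := univ.filter (fun j => 0 < x j)

noncomputable def Mle {n : ℕ} (c : Fin n → I) (p : Fin n) : ℝ :=
  ∑ k ∈ (univ.filter (fun q : Fin n => q ≤ p)).biUnion (fun q => Ka (c q)), μ k

noncomputable def Mlt {n : ℕ} (c : Fin n → I) (p : Fin n) : ℝ :=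
  ∑ k ∈ (univ.filter (fun q : Fin n => q < p)).biUnion (fun q => Ka (c q)), μ k

noncomputable def W {n : ℕ} (c : Fin n → I) : ℝ := ∏ p : Fin n, 1 / Mle μ Ka c p

def Cseq (x : I → ℕ) (n : ℕ) : Finset (Fin n → I) :=
  univ.filter (fun c => ∀ j, (univ.filter (fun p => c p = j)).card = x j)

noncomputable def Sbf (x : I → ℕ) (n : ℕ) : ℝ := ∑ c ∈ Cseq x n, W μ Ka c

noncomputable def psum (i : I) {n : ℕ} (c : Fin n → I) : ℝ :=
  ∑ p ∈ univ.filter (fun p : Fin n => c p = i), (Mle μ Ka c p - Mlt μ Ka c p)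

noncomputable def Rbf (x : I → ℕ) (n : ℕ) (i : I) : ℝ :=
  ∑ c ∈ Cseq x n, W μ Ka c * psum μ Ka i c

/- Fin index lemmas -/
theorem filter_le_castSucc {n : ℕ} (p : Fin n) :
    (univ.filter (fun q : Fin (n+1) => q ≤ p.castSucc)) =
      (univ.filter (fun q : Fin n => q ≤ p)).image Fin.castSucc := by
  ext q
  simp only [mem_filter, mem_univ, true_and, mem_image]
  constructor
  · intro hq
    have hne : q ≠ Fin.last n := by
      intro h; subst h; exact absurd hq (not_le.mpr (Fin.castSucc_lt_last p : p.castSucc < Fin.last n))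
    obtain ⟨q', rfl⟩ := Fin.exists_castSucc_eq.mpr hne
    exact ⟨q', by simpa using hq, rfl⟩
  · rintro ⟨q', hq', rfl⟩
    simpa using hq'

theorem filter_lt_castSucc {n : ℕ} (p : Fin n) :
    (univ.filter (fun q : Fin (n+1) => q < p.castSucc)) =
      (univ.filter (fun q : Fin n => q < p)).image Fin.castSucc := by
  ext q
  simp only [mem_filter, mem_univ, true_and, mem_image]
  constructor
  · intro hq
    have hne : q ≠ Fin.last n := by
      intro h; subst h
      exact absurd (hq.trans (Fin.castSucc_lt_last p)) (lt_irrefl _)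
    obtain ⟨q', rfl⟩ := Fin.exists_castSucc_eq.mpr hne
    exact ⟨q', by simpa using hq, rfl⟩
  · rintro ⟨q', hq', rfl⟩
    simpa using hq'

theorem filter_le_last {n : ℕ} :
    (univ.filter (fun q : Fin (n+1) => q ≤ Fin.last n)) = univ := by
  simp [Fin.le_last]

theorem filter_lt_last {n : ℕ} :
    (univ.filter (fun q : Fin (n+1) => q < Fin.last n)) =
      (univ : Finset (Fin n)).image Fin.castSucc := by
  ext q
  simp [Fin.lt_last_iff_ne_last, Fin.exists_castSucc_eq, eq_comm]

theorem univ_split {n : ℕ} :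
    (univ : Finset (Fin (n+1))) =
      insert (Fin.last n) ((univ : Finset (Fin n)).image Fin.castSucc) := by
  ext q
  simp only [mem_univ, true_iff, mem_insert, mem_image]
  rcases eq_or_ne q (Fin.last n) with h | h
  · exact Or.inl h
  · exact Or.inr (by obtain ⟨q', rfl⟩ := Fin.exists_castSucc_eq.mpr h; exact ⟨q', trivial, rfl⟩)

theorem Mle_castSucc {n : ℕ} (c' : Fin n → I) (j : I) (p : Fin n) :
    Mle μ Ka (Fin.snoc c' j) p.castSucc = Mle μ Ka c' p := by
  unfold Mle
  rw [filter_le_castSucc, image_biUnion]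
  congr 1
  refine Finset.biUnion_congr rfl ?_
  intro q _
  rw [Fin.snoc_castSucc]

theorem Mlt_castSucc {n : ℕ} (c' : Fin n → I) (j : I) (p : Fin n) :
    Mlt μ Ka (Fin.snoc c' j) p.castSucc = Mlt μ Ka c' p := by
  unfold Mlt
  rw [filter_lt_castSucc, image_biUnion]
  congr 1
  refine Finset.biUnion_congr rfl ?_
  intro q _
  rw [Fin.snoc_castSucc]

theorem Mle_last {n : ℕ} (c' : Fin n → I) (j : I) :
    Mle μ Ka (Fin.snoc c' j) (Fin.last n) =
      mass μ (Ka j ∪ univ.biUnion (fun q => Ka (c' q))) := by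
  unfold Mle mass
  rw [filter_le_last, univ_split, biUnion_insert, image_biUnion]
  congr 2
  · rw [Fin.snoc_last]
  · refine Finset.biUnion_congr rfl ?_
    intro q _
    rw [Fin.snoc_castSucc]

theorem Mlt_last {n : ℕ} (c' : Fin n → I) (j : I) :
    Mlt μ Ka (Fin.snoc c' j) (Fin.last n) =
      mass μ (univ.biUnion (fun q => Ka (c' q))) := by
  unfold Mlt mass
  rw [filter_lt_last, image_biUnion]
  congr 1
  refine Finset.biUnion_congr rfl ?_
  intro q _
  rw [Fin.snoc_castSucc]

theorem card_filter_snoc {n : ℕ} (c' : Fin n → I) (j k : I) :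
    (univ.filter (fun p : Fin (n+1) => (Fin.snoc c' j : Fin (n+1) → I) p = k)).card
      = (univ.filter (fun p : Fin n => c' p = k)).card + if j = k then 1 else 0 := by
  rw [Finset.card_filter, Finset.card_filter, Fin.sum_univ_castSucc]
  simp [Fin.snoc_castSucc, Fin.snoc_last]


theorem mem_Cseq {x : I → ℕ} {n : ℕ} {c : Fin n → I} :
    c ∈ Cseq x n ↔ ∀ j, (univ.filter (fun p => c p = j)).card = x j := by
  simp [Cseq]

theorem image_eq_Act {x : I → ℕ} {n : ℕ} {c : Fin n → I} (hc : c ∈ Cseq x n) :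
    univ.image c = Act x := by
  rw [mem_Cseq] at hc
  ext j
  simp only [mem_image, Act, mem_filter, mem_univ, true_and]
  constructor
  · rintro ⟨p, -, rfl⟩
    rw [← hc (c p)]
    exact card_pos.mpr ⟨p, by simp⟩
  · intro hj
    have : (univ.filter (fun p => c p = j)).Nonempty := by
      rw [← card_pos, hc j]; exact hj
    obtain ⟨p, hp⟩ := this
    exact ⟨p, (mem_filter.mp hp).2⟩

theorem biUnion_univ_eq {x : I → ℕ} {n : ℕ} {c : Fin n → I} (hc : c ∈ Cseq x n) :
    univ.biUnion (fun q => Ka (c q)) = (Act x).biUnion Ka := by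
  rw [← image_eq_Act hc, image_biUnion]

theorem snoc_mem_Cseq {x : I → ℕ} {n : ℕ} {j : I} (hj : 0 < x j)
    {c' : Fin n → I} (hc' : c' ∈ Cseq (Function.update x j (x j - 1)) n) :
    (Fin.snoc c' j : Fin (n+1) → I) ∈ Cseq x (n+1) := by
  rw [mem_Cseq] at hc' ⊢
  intro k
  rw [card_filter_snoc, hc' k]
  rcases eq_or_ne j k with rfl | h
  · simp [Function.update_self]; omega
  · simp [Function.update_of_ne (Ne.symm h), h]

theorem mem_Cseq_last {x : I → ℕ} {n : ℕ} {c : Fin (n+1) → I} (hc : c ∈ Cseq x (n+1)) :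
    0 < x (c (Fin.last n)) ∧
      Fin.init c ∈ Cseq (Function.update x (c (Fin.last n)) (x (c (Fin.last n)) - 1)) n := by
  rw [mem_Cseq] at hc
  have hcount : ∀ k, (univ.filter (fun p : Fin n => Fin.init c p = k)).card
      + (if c (Fin.last n) = k then 1 else 0) = x k := by
    intro k
    rw [← hc k, ← card_filter_snoc]
    congr 1
    ext p
    simp [Fin.snoc_init_self]
  have hpos : 0 < x (c (Fin.last n)) := by
    have := hcount (c (Fin.last n)); simp at this; omega
  refine ⟨hpos, mem_Cseq.mpr fun k => ?_⟩
  have := hcount k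
  rcases eq_or_ne (c (Fin.last n)) k with rfl | h
  · rw [Function.update_self]
    simp at this
    omega
  · rw [Function.update_of_ne (Ne.symm h)]
    rw [if_neg h] at this
    omega

theorem sum_Cseq_succ {x : I → ℕ} {n : ℕ} (f : (Fin (n+1) → I) → ℝ) :
    ∑ c ∈ Cseq x (n+1), f c
      = ∑ j ∈ Act x, ∑ c' ∈ Cseq (Function.update x j (x j - 1)) n,
          f (Fin.snoc c' j) := by
  rw [Finset.sum_sigma']
  refine Finset.sum_bij' (fun c _ => ⟨c (Fin.last n), Fin.init c⟩)
    (fun p _ => Fin.snoc p.2 p.1) ?_ ?_ ?_ ?_ ?_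
  · intro c hc
    obtain ⟨h1, h2⟩ := mem_Cseq_last hc
    exact Finset.mem_sigma.mpr ⟨by simp [Act, h1], h2⟩
  · intro p hp
    obtain ⟨h1, h2⟩ := Finset.mem_sigma.mp hp
    simp only [Act, mem_filter] at h1
    exact snoc_mem_Cseq h1.2 h2
  · intro c hc
    exact Fin.snoc_init_self c
  · intro p hp
    rcases p with ⟨j, c'⟩
    simp [Fin.snoc_last, Fin.init_snoc]
  · intro c hc
    rw [Fin.snoc_init_self]


theorem Act_insert {x : I → ℕ} {j : I} (hj : 0 < x j) :
    Act x = insert j (Act (Function.update x j (x j - 1))) := by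
  ext k
  simp only [Act, mem_filter, mem_univ, true_and, mem_insert]
  rcases eq_or_ne k j with rfl | h
  · simp [hj]
  · simp [h, Function.update_of_ne h]

theorem W_snoc {x : I → ℕ} {n : ℕ} {j : I} (hj : 0 < x j) {c' : Fin n → I}
    (hc' : c' ∈ Cseq (Function.update x j (x j - 1)) n) :
    W μ Ka (Fin.snoc c' j) = W μ Ka c' * (1 / mass μ ((Act x).biUnion Ka)) := by
  unfold W
  rw [Fin.prod_univ_castSucc]
  congr 1
  · exact Finset.prod_congr rfl fun p _ => by rw [Mle_castSucc]
  · rw [Mle_last, biUnion_univ_eq Ka hc', Act_insert hj, biUnion_insert]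

theorem psum_snoc {x : I → ℕ} {n : ℕ} {j : I} (hj : 0 < x j) (i : I) {c' : Fin n → I}
    (hc' : c' ∈ Cseq (Function.update x j (x j - 1)) n) :
    psum μ Ka i (Fin.snoc c' j) = psum μ Ka i c' +
      (if j = i then mass μ ((Act x).biUnion Ka)
          - mass μ ((Act (Function.update x j (x j - 1))).biUnion Ka) else 0) := by
  unfold psum
  rw [Finset.sum_filter, Finset.sum_filter, Fin.sum_univ_castSucc]
  congr 1
  · exact Finset.sum_congr rfl fun p _ => by
      rw [Fin.snoc_castSucc, Mle_castSucc, Mlt_castSucc]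
  · rw [Fin.snoc_last, Mle_last, Mlt_last, biUnion_univ_eq Ka hc', Act_insert hj, biUnion_insert]

theorem Rbf_len_zero (x : I → ℕ) (i : I) : Rbf μ Ka x 0 i = 0 := by
  unfold Rbf psum
  refine Finset.sum_eq_zero fun c _ => ?_
  have h : (univ.filter (fun p : Fin 0 => c p = i)) = ∅ := by simp
  rw [h, Finset.sum_empty, mul_zero]

theorem Rbf_zero {x : I → ℕ} {n : ℕ} {i : I} (hx : x i = 0) : Rbf μ Ka x n i = 0 := by
  unfold Rbf
  refine Finset.sum_eq_zero fun c hc => ?_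
  have : (univ.filter (fun p : Fin n => c p = i)) = ∅ := by
    rw [← Finset.card_eq_zero, mem_Cseq.mp hc i, hx]
  unfold psum
  rw [this, Finset.sum_empty, mul_zero]

theorem Sbf_zero : Sbf μ Ka (fun _ => 0) 0 = 1 := by
  unfold Sbf
  have h : Cseq (fun (_ : I) => 0) 0 = {(fun p : Fin 0 => (p.elim0 : I))} := by
    ext c
    simp only [mem_Cseq, Finset.mem_singleton]
    constructor
    · intro _; funext p; exact p.elim0
    · intro _ j
      simp
  rw [h, Finset.sum_singleton]
  unfold W
  simp

theorem sum_update_sub {x : I → ℕ} {j : I} (hj : 0 < x j) :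
    ∑ l, Function.update x j (x j - 1) l = (∑ l, x l) - 1 := by
  have h1 : ∑ l, Function.update x j (x j - 1) l
      = (x j - 1) + ∑ l ∈ univ.erase j, x l := by
    rw [← Finset.add_sum_erase _ _ (mem_univ j), Function.update_self]
    congr 1
    exact Finset.sum_congr rfl fun l hl => Function.update_of_ne (Finset.mem_erase.mp hl).1 _ _
  have h2 : x j + ∑ l ∈ univ.erase j, x l = ∑ l, x l := Finset.add_sum_erase _ _ (mem_univ j)
  omega

theorem S_rec (x : I → ℕ) (n : ℕ) :
    Sbf μ Ka x (n+1) =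
      (∑ j ∈ Act x, Sbf μ Ka (Function.update x j (x j - 1)) n)
        / mass μ ((Act x).biUnion Ka) := by
  unfold Sbf
  rw [sum_Cseq_succ, div_eq_mul_inv, Finset.sum_mul]
  refine Finset.sum_congr rfl fun j hj => ?_
  have hj' : 0 < x j := by simpa [Act] using hj
  rw [Finset.sum_mul]
  refine Finset.sum_congr rfl fun c' hc' => ?_
  rw [W_snoc μ Ka hj' hc', one_div]

theorem Phi_eq_Sbf : ∀ (n : ℕ) (x : I → ℕ), ∑ j, x j = n → Phi μ Ka x = Sbf μ Ka x n := by
  intro n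
  induction n with
  | zero =>
    intro x hx
    have hx0 : x = fun _ => 0 := by
      funext j
      exact Finset.sum_eq_zero_iff.mp hx j (mem_univ j)
    rw [Phi, if_pos hx0, hx0, Sbf_zero]
  | succ n ih =>
    intro x hx
    have hx0 : x ≠ fun _ => 0 := by
      intro h
      rw [h] at hx
      simp at hx
    rw [Phi, if_neg hx0, S_rec]
    congr 1
    · rw [← Finset.sum_attach (Act x) (fun j => Sbf μ Ka (Function.update x j (x j - 1)) n)]
      refine Finset.sum_congr rfl fun j _ => ?_
      have hj' : 0 < x j.1 := (Finset.mem_filter.mp j.2).2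
      refine ih _ ?_
      rw [sum_update_sub hj', hx]
      omega


theorem mass_pos (hμ : ∀ k, 0 < μ k) (hKa : ∀ i, (Ka i).Nonempty)
    {s : Finset I} (hs : s.Nonempty) : 0 < mass μ (s.biUnion Ka) := by
  obtain ⟨i, hi⟩ := hs
  obtain ⟨k, hk⟩ := hKa i
  exact Finset.sum_pos (fun k _ => hμ k) ⟨k, Finset.mem_biUnion.mpr ⟨i, hi, hk⟩⟩

theorem Act_nonempty {x : I → ℕ} {n : ℕ} (hx : ∑ j, x j = n + 1) : (Act x).Nonempty := by
  by_contra h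
  rw [Finset.not_nonempty_iff_eq_empty, Act, Finset.filter_eq_empty_iff] at h
  have h0 : ∑ j, x j = 0 := Finset.sum_eq_zero fun j hj => by have := h hj; omega
  omega

theorem Rbf_step {x : I → ℕ} {n : ℕ} {i : I} (hi : 0 < x i) :
    Rbf μ Ka x (n+1) i
      = (∑ j ∈ Act x, Rbf μ Ka (Function.update x j (x j - 1)) n i
          + (mass μ ((Act x).biUnion Ka)
              - mass μ ((Act (Function.update x i (x i - 1))).biUnion Ka))
            * Sbf μ Ka (Function.update x i (x i - 1)) n)
        / mass μ ((Act x).biUnion Ka) := by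
  have key : ∀ j ∈ Act x, ∑ c' ∈ Cseq (Function.update x j (x j - 1)) n,
      W μ Ka (Fin.snoc c' j) * psum μ Ka i (Fin.snoc c' j)
    = (Rbf μ Ka (Function.update x j (x j - 1)) n i
        + (if j = i then (mass μ ((Act x).biUnion Ka)
            - mass μ ((Act (Function.update x j (x j - 1))).biUnion Ka))
              * Sbf μ Ka (Function.update x j (x j - 1)) n else 0))
        * (1 / mass μ ((Act x).biUnion Ka)) := by
    intro j hj
    have hj' : 0 < x j := (Finset.mem_filter.mp hj).2
    have h1 : ∀ c' ∈ Cseq (Function.update x j (x j - 1)) n,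
        W μ Ka (Fin.snoc c' j) * psum μ Ka i (Fin.snoc c' j)
          = (W μ Ka c' * psum μ Ka i c'
              + W μ Ka c' * (if j = i then mass μ ((Act x).biUnion Ka)
                  - mass μ ((Act (Function.update x j (x j - 1))).biUnion Ka) else 0))
            * (1 / mass μ ((Act x).biUnion Ka)) := by
      intro c' hc'
      rw [W_snoc μ Ka hj' hc', psum_snoc μ Ka hj' i hc']
      ring
    rw [Finset.sum_congr rfl h1, ← Finset.sum_mul, Finset.sum_add_distrib,
      ← Finset.sum_mul]
    congr 2
    rcases eq_or_ne j i with rfl | h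
    · rw [if_pos rfl, if_pos rfl, mul_comm]
      rfl
    · rw [if_neg h, if_neg h, mul_zero]
  unfold Rbf
  rw [sum_Cseq_succ (fun c => W μ Ka c * psum μ Ka i c), Finset.sum_congr rfl key,
    ← Finset.sum_mul, Finset.sum_add_distrib]
  have hsi : ∑ j ∈ Act x, (if j = i then (mass μ ((Act x).biUnion Ka)
      - mass μ ((Act (Function.update x j (x j - 1))).biUnion Ka))
        * Sbf μ Ka (Function.update x j (x j - 1)) n else 0)
    = (mass μ ((Act x).biUnion Ka)
        - mass μ ((Act (Function.update x i (x i - 1))).biUnion Ka))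
      * Sbf μ Ka (Function.update x i (x i - 1)) n := by
    rw [Finset.sum_ite_eq' (Act x) i]
    rw [if_pos (by simp [Act, hi])]
  rw [hsi, mul_one_div]
  rfl

theorem R_main (hμ : ∀ k, 0 < μ k) (hKa : ∀ i, (Ka i).Nonempty) :
    ∀ (n : ℕ) (x : I → ℕ) (i : I), ∑ j, x j = n + 1 → 0 < x i →
      Rbf μ Ka x (n+1) i = Sbf μ Ka (Function.update x i (x i - 1)) n := by
  intro n
  induction n with
  | zero =>
    intro x i hx hi
    have hj0 : ∀ j, j ≠ i → x j = 0 := by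
      intro j hji
      have h1 := Finset.add_sum_erase univ x (mem_univ i)
      have h2 : x j ≤ ∑ l ∈ univ.erase i, x l :=
        Finset.single_le_sum (fun _ _ => Nat.zero_le _)
          (Finset.mem_erase.mpr ⟨hji, mem_univ j⟩)
      omega
    have hxi : x i = 1 := by
      have h1 := Finset.add_sum_erase univ x (mem_univ i)
      have h2 : ∑ l ∈ univ.erase i, x l = 0 :=
        Finset.sum_eq_zero fun l hl => hj0 l (Finset.mem_erase.mp hl).1
      omega
    have hupd : Function.update x i (x i - 1) = fun _ => 0 := by
      funext j
      rcases eq_or_ne j i with rfl | h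
      · simp [hxi]
      · simp [Function.update_of_ne h, hj0 j h]
    have hActy : Act (Function.update x i (x i - 1)) = ∅ := by
      rw [hupd]; simp [Act]
    have hMB : mass μ ((Act (Function.update x i (x i - 1))).biUnion Ka) = 0 := by
      rw [hActy]; simp [mass]
    have hMA : 0 < mass μ ((Act x).biUnion Ka) :=
      mass_pos μ Ka hμ hKa (Act_nonempty hx)
    rw [Rbf_step μ Ka hi, hMB]
    rw [Finset.sum_eq_zero (fun j _ => Rbf_len_zero μ Ka _ i), hupd, Sbf_zero]
    field_simp
    ring
  | succ m ih =>
    intro x i hx hi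
    set y := Function.update x i (x i - 1) with hy
    have hy_sum : ∑ j, y j = m + 1 := by
      rw [hy, sum_update_sub hi, hx]
      omega
    have hMB : 0 < mass μ ((Act y).biUnion Ka) :=
      mass_pos μ Ka hμ hKa (Act_nonempty hy_sum)
    have hMA : 0 < mass μ ((Act x).biUnion Ka) :=
      mass_pos μ Ka hμ hKa (Act_nonempty hx)
    have step : ∀ j ∈ Act y, Rbf μ Ka (Function.update x j (x j - 1)) (m+1) i
        = Sbf μ Ka (Function.update y j (y j - 1)) m := by
      intro j hj
      have hyj : 0 < y j := (Finset.mem_filter.mp hj).2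
      rcases eq_or_ne j i with rfl | h
      · rw [← hy]
        exact ih y j hy_sum hyj
      · have hxj : 0 < x j := by
          rw [hy, Function.update_of_ne h] at hyj
          exact hyj
        have hsum : ∑ l, Function.update x j (x j - 1) l = m + 1 := by
          rw [sum_update_sub hxj, hx]
          omega
        have hxi' : 0 < Function.update x j (x j - 1) i := by
          rwa [Function.update_of_ne (Ne.symm h)]
        have h2 := ih (Function.update x j (x j - 1)) i hsum hxi'
        have hyx : y j = x j := Function.update_of_ne h _ x
        rw [h2, hyx]
        congr 1
        rw [Function.update_of_ne (Ne.symm h) _ x, hy]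
        exact Function.update_comm h _ _ _
    have hact : Act x = insert i (Act y) := by
      rw [hy]; exact Act_insert hi
    have key1 : ∑ j ∈ Act x, Rbf μ Ka (Function.update x j (x j - 1)) (m+1) i
        = mass μ ((Act y).biUnion Ka) * Sbf μ Ka y (m+1) := by
      have hsum_eq : ∑ j ∈ Act x, Rbf μ Ka (Function.update x j (x j - 1)) (m+1) i
          = ∑ j ∈ Act y, Sbf μ Ka (Function.update y j (y j - 1)) m := by
        by_cases hyi : 0 < y i
        · have hins : insert i (Act y) = Act y :=
            Finset.insert_eq_self.mpr (by simp [Act, hyi])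
          rw [hact, hins]
          exact Finset.sum_congr rfl step
        · have hyi0 : y i = 0 := by omega
          have hnot : i ∉ Act y := by simp [Act, hyi0]
          rw [hact, Finset.sum_insert hnot]
          have hz : Rbf μ Ka (Function.update x i (x i - 1)) (m+1) i = 0 :=
            Rbf_zero μ Ka (by rw [← hy]; exact hyi0)
          rw [hz, zero_add]
          exact Finset.sum_congr rfl step
      rw [hsum_eq, S_rec μ Ka y m]
      field_simp
    rw [Rbf_step μ Ka hi, ← hy, key1]
    field_simp
    ring

end BFaux

/-- For `x ∈ ℕ^I` with `n = ∑_j x_j ≥ 1` and `i` with `x_i > 0`,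
`Φ(x − e_i) = ∑_c (∏_{p=1}^n 1/M(⋃_{q=1}^p 𝒦_{c_q})) · ∑_{p : c_p = i}
(M(⋃_{q=1}^p 𝒦_{c_q}) − M(⋃_{q=1}^{p−1} 𝒦_{c_q}))`, the sum ranging over all sequences
`c ∈ I^n` where each class `j` occurs exactly `x_j` times (with `M(∅) = 0`). -/
theorem balanced_fairness_rate_is_mean_fcfs_rate
    {I K : Type} [Fintype I] [DecidableEq I] [Nonempty I]
    [Fintype K] [DecidableEq K] [Nonempty K]
    (μ : K → ℝ) (hμ : ∀ k, 0 < μ k)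
    (Ka : I → Finset K) (hKa : ∀ i, (Ka i).Nonempty) (hcov : ∀ k, ∃ i, k ∈ Ka i)
    (x : I → ℕ) (n : ℕ) (hn : n = ∑ j, x j) (hn1 : 1 ≤ n)
    (i : I) (hi : 0 < x i) :
    Phi μ Ka (Function.update x i (x i - 1)) =
      ∑ c ∈ Finset.univ.filter
          (fun c : Fin n → I =>
            ∀ j, (Finset.univ.filter (fun p => c p = j)).card = x j),
        (∏ p : Fin n,
          1 / ∑ k ∈ (Finset.univ.filter (fun q : Fin n => q ≤ p)).biUnion
              (fun q => Ka (c q)), μ k) *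
        ∑ p ∈ Finset.univ.filter (fun p : Fin n => c p = i),
          ((∑ k ∈ (Finset.univ.filter (fun q : Fin n => q ≤ p)).biUnion
              (fun q => Ka (c q)), μ k) -
           (∑ k ∈ (Finset.univ.filter (fun q : Fin n => q < p)).biUnion
              (fun q => Ka (c q)), μ k)) := by
  obtain ⟨m, rfl⟩ : ∃ m, n = m + 1 := ⟨n - 1, by omega⟩
  have h1 : Phi μ Ka (Function.update x i (x i - 1))
      = BFaux.Sbf μ Ka (Function.update x i (x i - 1)) m :=
    BFaux.Phi_eq_Sbf μ Ka m _ (by rw [BFaux.sum_update_sub hi, ← hn]; omega)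
  have h2 := BFaux.R_main μ Ka hμ hKa m x i hn.symm hi
  rw [h1, ← h2]
  rfl
end

section
/- Fix i ∈ I with λ_i > 0 and suppose there exists ε > 0 such that G(λ⁺) < ∞, where λ⁺ agrees with λ except that its i-th coordinate is λ_i + ε. Then the map t ↦ G(λ with i-th coordinate replaced by t) is differentiable at t = λ_i, the series ∑_{x∈ℕ^I} x_i Φ(x) λ^x converges, and L_i = ψ · λ_i · (d/dt) G(λ with i-th coordinate t) evaluated at t = λ_i. That is, L_i = ψ λ_i ∂(1/ψ)/∂λ_i. -/
open scoped BigOperators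

lemma Phi_nonneg_aux {I K : Type} [Fintype I] [DecidableEq I] [DecidableEq K]
    (μ : K → ℝ) (hμ : ∀ k, 0 ≤ μ k) (Ka : I → Finset K) :
    ∀ N : ℕ, ∀ x : I → ℕ, (∑ j, x j) ≤ N → 0 ≤ Phi μ Ka x := by
  intro N
  induction N with
  | zero =>
    intro x hx
    have hx0 : x = fun _ => 0 := by
      funext j
      have := Finset.single_le_sum (f := x) (fun j _ => Nat.zero_le _) (Finset.mem_univ j)
      omega
    rw [Phi, if_pos hx0]
    norm_num
  | succ N ih =>
    intro x hx
    rw [Phi]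
    split
    · norm_num
    · apply div_nonneg
      · apply Finset.sum_nonneg
        intro j _
        apply ih
        have hj := j.2
        simp only [Finset.mem_filter, Finset.mem_univ, true_and] at hj
        have h1 : ∑ j', Function.update x j.1 (x j.1 - 1) j'
            = (x j.1 - 1) + ∑ j' ∈ Finset.univ.erase j.1, x j' := by
          rw [Finset.sum_update_of_mem (Finset.mem_univ _),
            Finset.sdiff_singleton_eq_erase]
        have h2 : ∑ j', x j' = x j.1 + ∑ j' ∈ Finset.univ.erase j.1, x j' := by
          rw [Finset.add_sum_erase _ _ (Finset.mem_univ _)]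
        omega
      · exact Finset.sum_nonneg fun k _ => hμ k

lemma Phi_nonneg {I K : Type} [Fintype I] [DecidableEq I] [DecidableEq K]
    (μ : K → ℝ) (hμ : ∀ k, 0 ≤ μ k) (Ka : I → Finset K) (x : I → ℕ) :
    0 ≤ Phi μ Ka x :=
  Phi_nonneg_aux μ hμ Ka (∑ j, x j) x le_rfl

lemma prod_update_pow {I : Type} [Fintype I] [DecidableEq I]
    (lam : I → ℝ) (i : I) (t : ℝ) (x : I → ℕ) :
    ∏ j, (Function.update lam i t) j ^ x j
      = t ^ x i * ∏ j ∈ Finset.univ.erase i, lam j ^ x j := by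
  rw [← Finset.mul_prod_erase Finset.univ (fun j => (Function.update lam i t) j ^ x j)
    (Finset.mem_univ i), Function.update_self]
  congr 1
  apply Finset.prod_congr rfl
  intro j hj
  rw [Function.update_of_ne (Finset.ne_of_mem_erase hj)]

lemma nat_mul_pow_shift (l : ℝ) : ∀ n : ℕ, (n : ℝ) * l ^ n = l * ((n : ℝ) * l ^ (n - 1))
  | 0 => by simp
  | (m + 1) => by
    rw [pow_succ, Nat.add_sub_cancel]
    push_cast
    ring

/-- If `λ_i > 0` and the normalization series converges at `λ⁺`
(which agrees with `λ` except that its `i`-th coordinate is `λ_i + ε` for some `ε > 0`),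
then `t ↦ G(λ with i-th coordinate t)` is differentiable at `t = λ_i`, the series
`∑_x x_i Φ(x) λ^x` converges, and `L_i = ψ λ_i ∂(1/ψ)/∂λ_i`. -/
theorem mean_number_of_jobs_eq_derivative_of_normalization
    {I K : Type} [Fintype I] [DecidableEq I] [Nonempty I]
    [Fintype K] [DecidableEq K] [Nonempty K]
    (μ : K → ℝ) (hμ : ∀ k, 0 < μ k)
    (Ka : I → Finset K) (hKa : ∀ i, (Ka i).Nonempty) (hcov : ∀ k, ∃ i, k ∈ Ka i)
    (lam : I → ℝ) (hlam : ∀ j, 0 ≤ lam j)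
    (i : I) (hi : 0 < lam i)
    (ε : ℝ) (hε : 0 < ε)
    (hGplus : Summable (fun x : I → ℕ =>
      Phi μ Ka x * ∏ j, (Function.update lam i (lam i + ε)) j ^ x j)) :
    ∃ D : ℝ,
      HasDerivAt
        (fun t => ∑' x : I → ℕ, Phi μ Ka x * ∏ j, (Function.update lam i t) j ^ x j)
        D (lam i) ∧
      Summable (fun x : I → ℕ => (x i : ℝ) * Phi μ Ka x * ∏ j, lam j ^ x j) ∧
      (∑' x : I → ℕ, Phi μ Ka x * ∏ j, lam j ^ x j)⁻¹ *
          (∑' x : I → ℕ, (x i : ℝ) * Phi μ Ka x * ∏ j, lam j ^ x j) =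
        (∑' x : I → ℕ, Phi μ Ka x * ∏ j, lam j ^ x j)⁻¹ * lam i * D := by
  classical
  set R : ℝ := lam i + ε with hR
  set r : ℝ := lam i + ε / 2 with hrdef
  have hR0 : 0 < R := by positivity
  have hr0 : 0 < r := by positivity
  have hrR : r < R := by rw [hrdef, hR]; linarith
  set P : (I → ℕ) → ℝ := fun x => ∏ j ∈ Finset.univ.erase i, lam j ^ x j with hP
  set c : (I → ℕ) → ℝ := fun x => Phi μ Ka x * P x with hc
  have hcnn : ∀ x, 0 ≤ c x := fun x =>
    mul_nonneg (Phi_nonneg μ (fun k => (hμ k).le) Ka x)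
      (Finset.prod_nonneg fun j _ => pow_nonneg (hlam j) _)
  -- the summable majorant at R
  have hGR : Summable (fun x : I → ℕ => c x * R ^ x i) := by
    apply hGplus.congr
    intro x
    rw [prod_update_pow]
    ring
  -- geometric bound
  obtain ⟨C, hC⟩ : ∃ C : ℝ, ∀ n : ℕ, (n : ℝ) * (r / R) ^ n ≤ C := by
    have hq : ‖r / R‖ < 1 := by
      rw [Real.norm_eq_abs, abs_of_nonneg (by positivity)]
      rw [div_lt_one hR0]; exact hrR
    have hs := summable_pow_mul_geometric_of_norm_lt_one (R := ℝ) 1 hq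
    have ht := hs.tendsto_atTop_zero
    obtain ⟨C, hCb⟩ := ht.bddAbove_range
    refine ⟨C, fun n => ?_⟩
    have := hCb ⟨n, rfl⟩
    simpa using this
  have hC0 : 0 ≤ C := le_trans (by simp) (hC 0)
  set C' : ℝ := C / r with hC'
  have hC'0 : 0 ≤ C' := by positivity
  have key : ∀ n : ℕ, (n : ℝ) * r ^ (n - 1) ≤ C' * R ^ n := by
    intro n
    cases n with
    | zero => simp; positivity
    | succ m =>
      rw [Nat.add_sub_cancel, hC', div_mul_eq_mul_div, le_div_iff₀ hr0, mul_assoc, ← pow_succ]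
      have h1 : (↑(m + 1) : ℝ) * (r / R) ^ (m + 1) ≤ C := hC (m + 1)
      have h2 : (r / R) ^ (m + 1) * R ^ (m + 1) = r ^ (m + 1) := by
        rw [← mul_pow, div_mul_cancel₀ _ (ne_of_gt hR0)]
      have h3 : (↑(m + 1) : ℝ) * (r / R) ^ (m + 1) * R ^ (m + 1) ≤ C * R ^ (m + 1) :=
        mul_le_mul_of_nonneg_right h1 (by positivity)
      calc (↑(m + 1) : ℝ) * r ^ (m + 1)
          = (↑(m + 1) : ℝ) * (r / R) ^ (m + 1) * R ^ (m + 1) := by rw [mul_assoc, h2]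
        _ ≤ C * R ^ (m + 1) := h3
  -- setup for hasDerivAt_tsum_of_isPreconnected
  set f : (I → ℕ) → ℝ → ℝ := fun x t => c x * t ^ x i with hf
  set f' : (I → ℕ) → ℝ → ℝ := fun x t => c x * ((x i : ℝ) * t ^ (x i - 1)) with hf'
  set u : (I → ℕ) → ℝ := fun x => C' * (c x * R ^ x i) with hu
  have hu_sum : Summable u := hGR.mul_left C'
  have hmem : lam i ∈ Set.Ioo (-r) r := by
    constructor
    · linarith
    · rw [hrdef]; linarith
  have hderiv : ∀ x : I → ℕ, ∀ t : ℝ, HasDerivAt (f x) (f' x t) t := fun x t =>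
    (hasDerivAt_pow (x i) t).const_mul (c x)
  have hbound : ∀ x : I → ℕ, ∀ t : ℝ, t ∈ Set.Ioo (-r) r → ‖f' x t‖ ≤ u x := by
    intro x t ht
    have htr : |t| ≤ r := le_of_lt (abs_lt.mpr ⟨ht.1, ht.2⟩)
    rw [hf', hu]
    have h1 : ‖c x * ((x i : ℝ) * t ^ (x i - 1))‖
        = c x * ((x i : ℝ) * |t| ^ (x i - 1)) := by
      rw [Real.norm_eq_abs, abs_mul, abs_of_nonneg (hcnn x), abs_mul, abs_pow,
        Nat.abs_cast]
    rw [h1]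
    have h2 : (x i : ℝ) * |t| ^ (x i - 1) ≤ (x i : ℝ) * r ^ (x i - 1) :=
      mul_le_mul_of_nonneg_left (pow_le_pow_left₀ (abs_nonneg t) htr _) (Nat.cast_nonneg _)
    have h3 : (x i : ℝ) * |t| ^ (x i - 1) ≤ C' * R ^ x i := le_trans h2 (key (x i))
    calc c x * ((x i : ℝ) * |t| ^ (x i - 1)) ≤ c x * (C' * R ^ x i) :=
          mul_le_mul_of_nonneg_left h3 (hcnn x)
      _ = C' * (c x * R ^ x i) := by ring
  have hf0 : Summable (fun x : I → ℕ => f x (lam i)) := by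
    apply Summable.of_nonneg_of_le (fun x => mul_nonneg (hcnn x) (pow_nonneg (hlam i) _))
      (fun x => ?_) hGR
    exact mul_le_mul_of_nonneg_left
      (pow_le_pow_left₀ (hlam i) (by rw [hR]; linarith) _) (hcnn x)
  have hD : HasDerivAt (fun t => ∑' x : I → ℕ, f x t) (∑' x : I → ℕ, f' x (lam i))
      (lam i) :=
    hasDerivAt_tsum_of_isPreconnected hu_sum isOpen_Ioo (convex_Ioo _ _).isPreconnected
      (fun x t _ => hderiv x t) hbound hmem hf0 hmem
  -- rewrite the goal function
  have hfun : (fun t => ∑' x : I → ℕ, Phi μ Ka x * ∏ j, (Function.update lam i t) j ^ x j)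
      = fun t => ∑' x : I → ℕ, f x t := by
    funext t
    apply tsum_congr
    intro x
    rw [prod_update_pow]
    ring
  -- summability of f' at lam i
  have hg_sum : Summable (fun x : I → ℕ => f' x (lam i)) :=
    Summable.of_norm_bounded hu_sum (fun x => hbound x (lam i) hmem)
  -- the pointwise identity for the mean-number series
  have h2 : (fun x : I → ℕ => (x i : ℝ) * Phi μ Ka x * ∏ j, lam j ^ x j)
      = fun x => lam i * f' x (lam i) := by
    funext x
    have hprod : ∏ j, lam j ^ x j = lam i ^ x i * P x := by
      rw [hP, ← Finset.mul_prod_erase Finset.univ (fun j => lam j ^ x j) (Finset.mem_univ i)]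
    simp only [hprod, hf', hc]
    have h := nat_mul_pow_shift (lam i) (x i)
    calc (x i : ℝ) * Phi μ Ka x * (lam i ^ x i * P x)
        = Phi μ Ka x * P x * ((x i : ℝ) * lam i ^ x i) := by ring
      _ = Phi μ Ka x * P x * (lam i * ((x i : ℝ) * lam i ^ (x i - 1))) := by rw [h]
      _ = lam i * (Phi μ Ka x * P x * ((x i : ℝ) * lam i ^ (x i - 1))) := by ring
  refine ⟨∑' x : I → ℕ, f' x (lam i), by rw [hfun]; exact hD, ?_, ?_⟩
  · rw [h2]
    exact hg_sum.mul_left (lam i)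
  · rw [h2, tsum_mul_left]
    ring
end

section
/- In the homogeneous randomized pool, suppose G(λ) < ∞. Then the probability that the system is empty is ψ = ∏_{ℓ=d}^{K} ( 1 − ρ_{|ℓ} ), where ρ_{|ℓ} = ρ · C(ℓ−1, d−1) / C(K−1, d−1). (In particular G(λ) < ∞ entails ρ < 1.) -/
open scoped BigOperators

/-- The normalization series `G(λ) = ∑_{x∈ℕ^I} Φ(x) λ^x` (as a real tsum). -/
noncomputable def Gf {I K : Type} [Fintype I] [DecidableEq I] [DecidableEq K]
    (μ : K → ℝ) (Ka : I → Finset K) (lam : I → ℝ) : ℝ :=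
  ∑' x : I → ℕ, Phi μ Ka x * ∏ i, lam i ^ x i

namespace HRPaux

theorem Phi_zero {I K : Type} [Fintype I] [DecidableEq I] [DecidableEq K]
    (μ : K → ℝ) (Ka : I → Finset K) : Phi μ Ka (fun _ => 0) = 1 := by
  rw [Phi]; simp

theorem Phi_pos' {I K : Type} [Fintype I] [DecidableEq I] [DecidableEq K]
    (μ : K → ℝ) (Ka : I → Finset K) (x : I → ℕ) (hx : ¬ x = fun _ => 0) :
    Phi μ Ka x = (∑ i ∈ (Finset.univ.filter (fun i => 0 < x i)),
      Phi μ Ka (Function.update x i (x i - 1))) /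
    (∑ k ∈ (Finset.univ.filter (fun i => 0 < x i)).biUnion Ka, μ k) := by
  rw [Phi, if_neg hx, Finset.sum_attach _ (fun i => Phi μ Ka (Function.update x i (x i - 1)))]

theorem Phi_nonneg {I K : Type} [Fintype I] [DecidableEq I] [DecidableEq K]
    (μ : K → ℝ) (hμ : ∀ k, 0 ≤ μ k) (Ka : I → Finset K) (x : I → ℕ) :
    0 ≤ Phi μ Ka x := by
  suffices H : ∀ n (x : I → ℕ), ∑ i, x i = n → 0 ≤ Phi μ Ka x from H _ x rfl
  intro n
  induction n using Nat.strong_induction_on with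
  | _ n ih =>
  intro x hn
  rw [Phi]
  split
  · norm_num
  · apply div_nonneg
    · apply Finset.sum_nonneg
      intro i _
      have hi := i.2
      simp only [Finset.mem_filter] at hi
      refine ih _ ?_ _ rfl
      subst hn
      apply Finset.sum_lt_sum
      · intro j _
        rcases eq_or_ne j i.1 with rfl | h
        · simp [Function.update_self]
        · rw [Function.update_of_ne h]
      · exact ⟨i.1, Finset.mem_univ i.1, by simp [Function.update_self]; omega⟩
    · exact Finset.sum_nonneg fun k _ => hμ k

variable {K d : ℕ}

abbrev Cls (K d : ℕ) := {S : Finset (Fin K) // S.card = d}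

/-- The active server set. -/
def act (x : Cls K d → ℕ) : Finset (Fin K) :=
  (Finset.univ.filter (fun i => 0 < x i)).biUnion (fun S => S.1)

noncomputable def f (μ ν : ℝ) (x : Cls K d → ℕ) : ℝ :=
  Phi (fun _ : Fin K => μ) (fun S : Cls K d => S.1) x * ν ^ (∑ i, x i)

noncomputable def F (μ ν : ℝ) (A : Finset (Fin K)) (x : Cls K d → ℕ) : ℝ :=
  if act x ⊆ A then f μ ν x else 0

noncomputable def G (μ ν : ℝ) (d : ℕ) (A : Finset (Fin K)) : ℝ :=
  ∑' x : Cls K d → ℕ, F μ ν A x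

theorem act_zero : act (K := K) (d := d) (fun _ => 0) = ∅ := by
  simp [act]

theorem act_nonempty (hd : 1 ≤ d) (x : Cls K d → ℕ) (hx : ¬ x = fun _ => 0) :
    (act x).Nonempty := by
  have : ∃ S, 0 < x S := by
    by_contra h
    push_neg at h
    exact hx (funext fun S => Nat.le_zero.mp (h S))
  obtain ⟨S, hS⟩ := this
  obtain ⟨k, hk⟩ := Finset.card_pos.mp (by rw [S.2]; omega)
  exact ⟨k, Finset.mem_biUnion.mpr ⟨S, Finset.mem_filter.mpr ⟨Finset.mem_univ S, hS⟩, hk⟩⟩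

theorem filter_update (x : Cls K d → ℕ) (S : Cls K d) :
    Finset.univ.filter (fun i => 0 < Function.update x S (x S + 1) i)
      = insert S (Finset.univ.filter (fun i => 0 < x i)) := by
  ext i
  rcases eq_or_ne i S with rfl | h
  · simp [Function.update_self]
  · simp [Function.update_of_ne h, h]

theorem act_update (x : Cls K d → ℕ) (S : Cls K d) :
    act (Function.update x S (x S + 1)) = S.1 ∪ act x := by
  rw [act, filter_update, Finset.biUnion_insert]
  rfl

theorem sum_update (x : Cls K d → ℕ) (S : Cls K d) :
    ∑ i, Function.update x S (x S + 1) i = (∑ i, x i) + 1 := by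
  rw [Finset.sum_update_of_mem (Finset.mem_univ S),
    ← Finset.sum_erase_add Finset.univ x (Finset.mem_univ S), Finset.sdiff_singleton_eq_erase]
  ring

theorem update_injective (S : Cls K d) :
    Function.Injective (fun y : Cls K d → ℕ => Function.update y S (y S + 1)) := by
  intro y y' h
  funext i
  rcases eq_or_ne i S with rfl | hi
  · have := congrFun h i
    simpa using this
  · have := congrFun h i
    simp only at this
    rwa [Function.update_of_ne hi, Function.update_of_ne hi] at this

/-- The key recursion for `Phi` in the homogeneous pool. -/
theorem Phi_rec (hd : 1 ≤ d) {μ : ℝ} (hμ : 0 < μ) (x : Cls K d → ℕ) (hx : ¬ x = fun _ => 0) :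
    μ * (act x).card * Phi (fun _ : Fin K => μ) (fun S : Cls K d => S.1) x
      = ∑ S ∈ Finset.univ.filter (fun i => 0 < x i),
          Phi (fun _ : Fin K => μ) (fun S : Cls K d => S.1) (Function.update x S (x S - 1)) := by
  have hden : ∑ k ∈ act x, μ = (act x).card * μ := by
    rw [Finset.sum_const, nsmul_eq_mul]
  have hpos : (0:ℝ) < (act x).card * μ := by
    apply mul_pos _ hμ
    exact_mod_cast Finset.card_pos.mpr (act_nonempty hd x hx)
  rw [Phi_pos' _ _ _ hx]
  show μ * (act x).card * (_ / ∑ k ∈ act x, (fun _ : Fin K => μ) k) = _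
  rw [show (∑ k ∈ act x, (fun _ : Fin K => μ) k) = (act x).card * μ from hden]
  field_simp
  have hc : ((act x).card : ℝ) ≠ 0 := fun h => by rw [h, zero_mul] at hpos; exact lt_irrefl _ hpos
  exact mul_div_cancel_left₀ _ hc

section Main

variable {μ ν : ℝ} (hd : 1 ≤ d) (hμ : 0 < μ) (hν : 0 < ν)
variable (hf : Summable (f μ ν : (Cls K d → ℕ) → ℝ))

include hμ hν in
theorem f_nonneg (x : Cls K d → ℕ) : 0 ≤ f μ ν x :=
  mul_nonneg (Phi_nonneg _ (fun _ => hμ.le) _ _) (pow_nonneg hν.le _)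

include hμ hν in
theorem F_nonneg (A : Finset (Fin K)) (x : Cls K d → ℕ) : 0 ≤ F μ ν A x := by
  unfold F; split
  · exact f_nonneg hμ hν x
  · exact le_refl 0

include hμ hν in
theorem F_le_f (A : Finset (Fin K)) (x : Cls K d → ℕ) : F μ ν A x ≤ f μ ν x := by
  unfold F; split
  · exact le_refl _
  · exact f_nonneg hμ hν x

include hμ hν hf in
theorem summable_F (A : Finset (Fin K)) : Summable (F μ ν A : (Cls K d → ℕ) → ℝ) :=
  Summable.of_nonneg_of_le (F_nonneg hμ hν A) (F_le_f hμ hν A) hf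

theorem F_zero (A : Finset (Fin K)) : F μ ν A (fun _ : Cls K d => 0) = 1 := by
  unfold F
  rw [if_pos (by rw [act_zero]; exact Finset.empty_subset A)]
  unfold f
  rw [Phi_zero]
  simp

include hμ hν hf in
theorem one_le_G (A : Finset (Fin K)) : 1 ≤ G μ ν d A := by
  have := Summable.le_tsum (summable_F hμ hν hf A) (fun _ : Cls K d => 0)
    (fun j _ => F_nonneg hμ hν A j)
  rwa [F_zero] at this

include hd in
theorem G_empty : G μ ν d (∅ : Finset (Fin K)) = 1 := by
  unfold G
  have : ∀ x : Cls K d → ℕ, F μ ν ∅ x = if x = (fun _ : Cls K d => 0) then 1 else 0 := by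
    intro x
    rcases eq_or_ne x (fun _ : Cls K d => 0) with rfl | hx
    · rw [F_zero, if_pos rfl]
    · rw [if_neg hx]
      unfold F
      rw [if_neg]
      rw [Finset.subset_empty]
      exact (act_nonempty hd x hx).ne_empty
  rw [tsum_congr this, tsum_ite_eq]

theorem card_filter_subset (A : Finset (Fin K)) :
    (Finset.univ.filter (fun S : Cls K d => S.1 ⊆ A)).card = A.card.choose d := by
  rw [← Finset.card_powersetCard d A]
  apply Finset.card_bij (fun S _ => S.1)
  · intro S hS
    simp only [Finset.mem_filter] at hS
    exact Finset.mem_powersetCard.mpr ⟨hS.2, S.2⟩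
  · intro S _ T _ h
    exact Subtype.ext h
  · intro t ht
    rw [Finset.mem_powersetCard] at ht
    exact ⟨⟨t, ht.2⟩, Finset.mem_filter.mpr ⟨Finset.mem_univ _, ht.1⟩, rfl⟩

/-- The per-class summand used in the balance identity. -/
noncomputable def gS (μ ν : ℝ) (A : Finset (Fin K)) (S : Cls K d) (x : Cls K d → ℕ) : ℝ :=
  if act x ⊆ A ∧ 0 < x S then
    Phi (fun _ : Fin K => μ) (fun T : Cls K d => T.1) (Function.update x S (x S - 1))
      * ν ^ (∑ i, x i)
  else 0

theorem gS_comp (A : Finset (Fin K)) (S : Cls K d) (y : Cls K d → ℕ) :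
    gS μ ν A S (Function.update y S (y S + 1))
      = (if S.1 ⊆ A then ν else 0) * F μ ν A y := by
  unfold gS F
  have h1 : Function.update y S (y S + 1) S = y S + 1 := Function.update_self _ _ _
  have h2 : Function.update (Function.update y S (y S + 1)) S
      (Function.update y S (y S + 1) S - 1) = y := by
    rw [h1]
    simp only [Nat.add_sub_cancel]
    rw [Function.update_idem, Function.update_eq_self]
  rw [h2, act_update, sum_update]
  simp only [Function.update_self, Finset.union_subset_iff]
  unfold f
  by_cases hS : S.1 ⊆ A <;> by_cases hA : act y ⊆ A <;>
    simp [hS, hA, pow_succ, Nat.succ_pos] <;> ring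

theorem gS_support (A : Finset (Fin K)) (S : Cls K d) (x : Cls K d → ℕ)
    (hx : x ∉ Set.range (fun y : Cls K d → ℕ => Function.update y S (y S + 1))) :
    gS μ ν A S x = 0 := by
  unfold gS
  rw [if_neg]
  rintro ⟨-, hpos⟩
  apply hx
  refine ⟨Function.update x S (x S - 1), ?_⟩
  simp only [Function.update_self, Function.update_idem]
  rw [Nat.sub_add_cancel hpos, Function.update_eq_self]

theorem gS_eq_extend (A : Finset (Fin K)) (S : Cls K d) :
    (gS μ ν A S : (Cls K d → ℕ) → ℝ)
      = Function.extend (fun y : Cls K d → ℕ => Function.update y S (y S + 1))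
          (fun y => (if S.1 ⊆ A then ν else 0) * F μ ν A y) 0 := by
  funext x
  by_cases hx : ∃ y : Cls K d → ℕ, Function.update y S (y S + 1) = x
  · obtain ⟨y, rfl⟩ := hx
    rw [Function.Injective.extend_apply (update_injective S)]
    exact gS_comp A S y
  · rw [Function.extend_apply' _ _ _ hx]
    exact gS_support A S x (by rwa [Set.mem_range])

include hμ hν hf in
theorem hasSum_gS (A : Finset (Fin K)) (S : Cls K d) :
    HasSum (gS μ ν A S : (Cls K d → ℕ) → ℝ)
      ((if S.1 ⊆ A then ν else 0) * G μ ν d A) := by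
  rw [gS_eq_extend]
  apply (hasSum_extend_zero (update_injective S)).mpr
  have h1 : Summable (fun y : Cls K d → ℕ => (if S.1 ⊆ A then ν else 0) * F μ ν A y) :=
    (summable_F hμ hν hf A).mul_left _
  have := h1.hasSum
  rwa [tsum_mul_left] at this

include hμ hν hf in
theorem summable_gS (A : Finset (Fin K)) (S : Cls K d) :
    Summable (gS μ ν A S : (Cls K d → ℕ) → ℝ) :=
  (hasSum_gS hμ hν hf A S).summable

include hμ hν hf in
theorem tsum_gS (A : Finset (Fin K)) (S : Cls K d) :
    ∑' x : Cls K d → ℕ, gS μ ν A S x = (if S.1 ⊆ A then ν else 0) * G μ ν d A :=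
  (hasSum_gS hμ hν hf A S).tsum_eq

include hd hμ in
theorem pointwise_sum (A : Finset (Fin K)) (x : Cls K d → ℕ) :
    (if act x ⊆ A then μ * (act x).card * f μ ν x else 0) = ∑ S : Cls K d, gS μ ν A S x := by
  by_cases hA : act x ⊆ A
  · rcases eq_or_ne x (fun _ : Cls K d => 0) with rfl | hx
    · rw [if_pos hA, act_zero]
      simp [gS]
    · rw [if_pos hA]
      unfold f
      rw [← mul_assoc, Phi_rec hd hμ x hx, Finset.sum_mul, Finset.sum_filter]
      apply Finset.sum_congr rfl
      intro S _
      unfold gS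
      by_cases hS : 0 < x S <;> simp [hS, hA]
  · rw [if_neg hA]
    symm
    apply Finset.sum_eq_zero
    intro S _
    unfold gS
    rw [if_neg]
    rintro ⟨h, -⟩
    exact hA h

include hd hμ hν hf in
theorem summable_lhs (A : Finset (Fin K)) :
    Summable (fun x : Cls K d → ℕ => if act x ⊆ A then μ * (act x).card * f μ ν x else 0) := by
  apply (summable_sum (fun S (_ : S ∈ Finset.univ) => summable_gS hμ hν hf A S)).congr
  intro x
  exact (pointwise_sum hd hμ A x).symm

include hd hμ hν hf in
theorem tsum_lhs (A : Finset (Fin K)) :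
    ∑' x : Cls K d → ℕ, (if act x ⊆ A then μ * (act x).card * f μ ν x else 0)
      = ν * (A.card.choose d : ℝ) * G μ ν d A := by
  rw [tsum_congr (pointwise_sum hd hμ A),
    Summable.tsum_finsetSum (fun S (_ : S ∈ Finset.univ) => summable_gS hμ hν hf A S)]
  have : ∀ S : Cls K d, S ∈ Finset.univ →
      ∑' x : Cls K d → ℕ, gS μ ν A S x = (if S.1 ⊆ A then ν else 0) * G μ ν d A :=
    fun S _ => tsum_gS hμ hν hf A S
  rw [Finset.sum_congr rfl this, ← Finset.sum_mul]
  congr 1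
  rw [← Finset.sum_filter, Finset.sum_const, nsmul_eq_mul, card_filter_subset A]
  ring

theorem pointwise_card (A : Finset (Fin K)) (x : Cls K d → ℕ) :
    (if act x ⊆ A then μ * (act x).card * f μ ν x else 0)
      = μ * A.card * F μ ν A x - ∑ k ∈ A, μ * F μ ν (A.erase k) x := by
  by_cases hA : act x ⊆ A
  · rw [if_pos hA]
    unfold F
    rw [if_pos hA]
    have herase : ∀ k ∈ A, (if act x ⊆ A.erase k then f μ ν x else 0)
        = if k ∉ act x then f μ ν x else 0 := by
      intro k _
      have hiff : (act x ⊆ A.erase k) ↔ k ∉ act x := by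
        rw [Finset.subset_erase]
        exact and_iff_right hA
      by_cases hk : k ∉ act x
      · rw [if_pos (hiff.mpr hk), if_pos hk]
      · rw [if_neg (fun h => hk (hiff.mp h)), if_neg hk]
    have hsum : ∑ k ∈ A, μ * (if act x ⊆ A.erase k then f μ ν x else 0)
        = ((A.card - (act x).card : ℕ) : ℝ) * (μ * f μ ν x) := by
      rw [Finset.sum_congr rfl (fun k hk => by rw [herase k hk])]
      have : ∀ k ∈ A, (if k ∉ act x then μ * f μ ν x else 0)
          = if k ∉ act x then μ * f μ ν x else 0 := fun _ _ => rfl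
      rw [Finset.sum_congr rfl (fun k hk => (by split <;> ring :
        μ * (if k ∉ act x then f μ ν x else 0) = if k ∉ act x then μ * f μ ν x else 0))]
      rw [← Finset.sum_filter, Finset.sum_const, nsmul_eq_mul]
      congr 2
      rw [← Finset.sdiff_eq_filter, Finset.card_sdiff_of_subset hA]
    rw [hsum]
    have hle : (act x).card ≤ A.card := Finset.card_le_card hA
    push_cast [Nat.cast_sub hle]
    ring
  · rw [if_neg hA]
    unfold F
    rw [if_neg hA]
    have : ∀ k ∈ A, μ * (if act x ⊆ A.erase k then f μ ν x else 0) = 0 := by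
      intro k _
      rw [if_neg, mul_zero]
      intro h
      exact hA (h.trans (Finset.erase_subset k A))
    rw [Finset.sum_congr rfl this]
    simp

include hμ hν hf in
theorem tsum_rhs (A : Finset (Fin K)) :
    ∑' x : Cls K d → ℕ, (if act x ⊆ A then μ * (act x).card * f μ ν x else 0)
      = μ * A.card * G μ ν d A - μ * ∑ k ∈ A, G μ ν d (A.erase k) := by
  have h1 : Summable (fun x : Cls K d → ℕ => μ * A.card * F μ ν A x) :=
    (summable_F hμ hν hf A).mul_left _
  have h2 : ∀ k ∈ A, Summable (fun x : Cls K d → ℕ => μ * F μ ν (A.erase k) x) :=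
    fun k _ => (summable_F hμ hν hf (A.erase k)).mul_left _
  have h3 : Summable (fun x : Cls K d → ℕ => ∑ k ∈ A, μ * F μ ν (A.erase k) x) :=
    summable_sum h2
  rw [tsum_congr (pointwise_card A), Summable.tsum_sub h1 h3, tsum_mul_left, Summable.tsum_finsetSum h2]
  have : ∀ k ∈ A, ∑' x : Cls K d → ℕ, μ * F μ ν (A.erase k) x = μ * G μ ν d (A.erase k) :=
    fun k _ => tsum_mul_left
  rw [Finset.sum_congr rfl this, ← Finset.mul_sum]
  rfl

include hd hμ hν hf in
theorem balance (A : Finset (Fin K)) :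
    ν * (A.card.choose d : ℝ) * G μ ν d A
      = μ * A.card * G μ ν d A - μ * ∑ k ∈ A, G μ ν d (A.erase k) :=
  (tsum_lhs hd hμ hν hf A).symm.trans (tsum_rhs hμ hν hf A)

include hd hμ hν hf in
theorem G_formula : ∀ (n : ℕ) (A : Finset (Fin K)), A.card = n →
    (∀ ℓ ∈ Finset.Icc 1 n, ν * (ℓ.choose d : ℝ) < μ * ℓ) ∧
    G μ ν d A = ∏ ℓ ∈ Finset.Icc 1 n, (1 - ν * (ℓ.choose d : ℝ) / (μ * ℓ))⁻¹ := by
  intro n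
  induction n with
  | zero =>
    intro A hA
    rw [Finset.card_eq_zero] at hA
    subst hA
    refine ⟨by simp, ?_⟩
    simp [G_empty hd]
  | succ n ih =>
    intro A hA
    have hAne : A.Nonempty := Finset.card_pos.mp (by omega)
    obtain ⟨k₀, hk₀⟩ := hAne
    have herase : ∀ k ∈ A, (A.erase k).card = n := by
      intro k hk
      rw [Finset.card_erase_of_mem hk, hA]
      omega
    have ihA := ih (A.erase k₀) (herase k₀ hk₀)
    set P : ℝ := ∏ ℓ ∈ Finset.Icc 1 n, (1 - ν * (ℓ.choose d : ℝ) / (μ * ℓ))⁻¹ with hP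
    have hP1 : 1 ≤ P := by
      rw [← ihA.2]
      exact one_le_G hμ hν hf _
    have hGA : 1 ≤ G μ ν d A := one_le_G hμ hν hf A
    have hbal := balance hd hμ hν hf A
    have hsum : ∑ k ∈ A, G μ ν d (A.erase k) = (A.card : ℝ) * P := by
      rw [Finset.sum_congr rfl (fun k hk => (ih (A.erase k) (herase k hk)).2)]
      rw [Finset.sum_const, nsmul_eq_mul]
    rw [hsum, hA] at hbal
    -- hbal : ν * C * G A = μ * (n+1) * G A - μ * ((n+1) * P)
    have hnpos : (0:ℝ) < (n + 1 : ℕ) := by positivity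
    have hC : (0:ℝ) ≤ ((n+1).choose d : ℝ) := by positivity
    have ht : 0 < μ * ((n+1 : ℕ) : ℝ) - ν * ((n+1).choose d : ℝ) := by
      nlinarith [mul_pos hμ hnpos, mul_pos (mul_pos hμ hnpos) (lt_of_lt_of_le zero_lt_one hP1)]
    have hGval : G μ ν d A = P * (μ * ((n+1 : ℕ) : ℝ)) /
        (μ * ((n+1 : ℕ) : ℝ) - ν * ((n+1).choose d : ℝ)) := by
      rw [eq_div_iff (ne_of_gt ht)]
      nlinarith [hbal]
    constructor
    · intro ℓ hℓ
      rw [Finset.mem_Icc] at hℓ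
      rcases Nat.lt_or_ge ℓ (n+1) with h | h
      · exact ihA.1 ℓ (Finset.mem_Icc.mpr ⟨hℓ.1, by omega⟩)
      · have : ℓ = n + 1 := by omega
        subst this
        push_cast
        push_cast at ht
        linarith
    · rw [Finset.prod_Icc_succ_top (by omega : 1 ≤ n + 1), ← hP, hGval]
      have hinv : (1 - ν * ((n+1).choose d : ℝ) / (μ * ((n+1 : ℕ) : ℝ)))⁻¹
          = (μ * ((n+1 : ℕ) : ℝ)) / (μ * ((n+1 : ℕ) : ℝ) - ν * ((n+1).choose d : ℝ)) := by
        rw [one_sub_div (by positivity)]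
        rw [inv_div]
      push_cast at hinv ⊢
      rw [hinv]
      ring

end Main

end HRPaux

/-- In the homogeneous randomized pool (`K` servers of rate `μ`, classes
given by the `d`-element subsets of servers, each with arrival rate `Kλ/C(K,d)`), if
`G(λ) < ∞` then `ψ = ∏_{ℓ=d}^K (1 − ρ_{|ℓ})` with
`ρ_{|ℓ} = ρ C(ℓ−1,d−1)/C(K−1,d−1)` and `ρ = λ/μ`; in particular `ρ < 1`. -/
theorem homogeneous_randomized_pool_empty_probability
    (K d : ℕ) (hd1 : 1 ≤ d) (hdK : d ≤ K)
    (lam μ : ℝ) (hlam : 0 < lam) (hμ : 0 < μ)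
    (hG : Summable (fun x : {S : Finset (Fin K) // S.card = d} → ℕ =>
      Phi (fun _ : Fin K => μ) (fun S => S.1) x *
        ∏ S : {S : Finset (Fin K) // S.card = d},
          ((K : ℝ) * lam / (K.choose d)) ^ x S)) :
    (Gf (fun _ : Fin K => μ) (fun S : {S : Finset (Fin K) // S.card = d} => S.1)
        (fun _ => (K : ℝ) * lam / (K.choose d)))⁻¹ =
      (∏ ℓ ∈ Finset.Icc d K,
        (1 - lam / μ * ((ℓ - 1).choose (d - 1) : ℝ) / (((K - 1).choose (d - 1) : ℕ) : ℝ))) ∧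
    lam / μ < 1 := by
  classical
  have hK1 : 1 ≤ K := le_trans hd1 hdK
  have hCKd : 0 < K.choose d := Nat.choose_pos hdK
  have hCKd' : 0 < (K-1).choose (d-1) := Nat.choose_pos (by omega)
  set ν : ℝ := (K : ℝ) * lam / (K.choose d) with hν_def
  have hν : 0 < ν := by
    apply div_pos (mul_pos (by exact_mod_cast hK1) hlam)
    exact_mod_cast hCKd
  have hf : Summable (HRPaux.f μ ν : (HRPaux.Cls K d → ℕ) → ℝ) := by
    apply hG.congr
    intro x
    unfold HRPaux.f
    rw [Finset.prod_pow_eq_pow_sum]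
  have hform := HRPaux.G_formula (K := K) hd1 hμ hν hf K Finset.univ
    (by rw [Finset.card_univ, Fintype.card_fin])
  -- Gf equals G univ
  have hGf : Gf (fun _ : Fin K => μ) (fun S : {S : Finset (Fin K) // S.card = d} => S.1)
      (fun _ => (K : ℝ) * lam / (K.choose d)) = HRPaux.G (K := K) μ ν d Finset.univ := by
    unfold Gf HRPaux.G
    apply tsum_congr
    intro x
    rw [show HRPaux.F μ ν Finset.univ x = HRPaux.f μ ν x from
      if_pos (Finset.subset_univ _)]
    unfold HRPaux.f
    rw [Finset.prod_pow_eq_pow_sum]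
  -- ρ < 1
  have hKmem : K ∈ Finset.Icc 1 K := Finset.mem_Icc.mpr ⟨hK1, le_refl K⟩
  have hρ : lam / μ < 1 := by
    have h := hform.1 K hKmem
    have hνC : ν * (K.choose d : ℝ) = K * lam := by
      rw [hν_def]
      field_simp
    rw [hνC] at h
    rw [div_lt_one hμ]
    have hK0 : (0:ℝ) < (K:ℝ) := by exact_mod_cast hK1
    nlinarith
  refine ⟨?_, hρ⟩
  rw [hGf, hform.2, Finset.prod_inv_distrib, inv_inv]
  -- kill the factors with ℓ < d
  rw [← Finset.prod_subset (Finset.Icc_subset_Icc hd1 (le_refl K))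
    (fun ℓ hℓ hℓ' => ?_)]
  swap
  · rw [Finset.mem_Icc] at hℓ hℓ'
    have : ℓ < d := by omega
    rw [Nat.choose_eq_zero_of_lt this]
    norm_num
  apply Finset.prod_congr rfl
  intro ℓ hℓ
  rw [Finset.mem_Icc] at hℓ
  have hℓ1 : 1 ≤ ℓ := le_trans hd1 hℓ.1
  congr 1
  -- ν * C(ℓ,d)/(μ*ℓ) = lam/μ * C(ℓ-1,d-1)/C(K-1,d-1)
  have h1 : (ℓ : ℝ) * ((ℓ-1).choose (d-1) : ℝ) = (ℓ.choose d : ℝ) * d := by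
    have h := Nat.add_one_mul_choose_eq (ℓ-1) (d-1)
    rw [show ℓ - 1 + 1 = ℓ by omega, show d - 1 + 1 = d by omega] at h
    exact_mod_cast h
  have h2 : (K : ℝ) * ((K-1).choose (d-1) : ℝ) = (K.choose d : ℝ) * d := by
    have h := Nat.add_one_mul_choose_eq (K-1) (d-1)
    rw [show K - 1 + 1 = K by omega, show d - 1 + 1 = d by omega] at h
    exact_mod_cast h
  have hd0 : (0:ℝ) < (d:ℝ) := by exact_mod_cast hd1
  have hℓ0 : (0:ℝ) < (ℓ:ℝ) := by exact_mod_cast hℓ1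
  have hCK0 : (0:ℝ) < (K.choose d : ℝ) := by exact_mod_cast hCKd
  have hCK'0 : (0:ℝ) < ((K-1).choose (d-1) : ℝ) := by exact_mod_cast hCKd'
  have key : (K:ℝ) * (ℓ.choose d : ℝ) * ((K-1).choose (d-1) : ℝ)
      = ((ℓ-1).choose (d-1) : ℝ) * (K.choose d : ℝ) * ℓ := by
    apply mul_right_cancel₀ (ne_of_gt hd0)
    linear_combination (-(K:ℝ) * ((K-1).choose (d-1) : ℝ)) * h1
      + ((ℓ:ℝ) * ((ℓ-1).choose (d-1) : ℝ)) * h2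
  rw [hν_def]
  field_simp
  linear_combination key
end
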